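/- Let a, b be real numbers with b > 0 and a·b > 1/4. Then for every fixed natural number k ≥ 1, the limit as l → ∞ of b·D(k + l) / (b·D(l))^(2^k) equals 1. -/

import Mathlib

theorem stmt_6 (a b : ℝ) (hb : 0 < b) (hab : a * b > 1/4)
    (D : ℕ → ℝ) (hD0 : D 0 = 1) (hD : ∀ n, D (n + 1) = a + b * D n ^ 2)
    (k : ℕ) (hk : 1 ≤ k) :
    Filter.Tendsto (fun l : ℕ => b * D (k + l) / (b * D l) ^ (2 ^ k))
      Filter.atTop (nhds 1) := by
  clear hk
  set E : ℕ → ℝ := fun n => b * D n with hE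
  have hstep : ∀ n, E (n+1) = a * b + E n ^ 2 := by
    intro n; simp only [hE, hD n]; ring
  have hpos : ∀ n, 0 < E n := by
    intro n
    induction n with
    | zero => simpa [hE, hD0] using hb
    | succ n ih => rw [hstep]; nlinarith
  have hgrow : ∀ n : ℕ, b + n * (a*b - 1/4) ≤ E n := by
    intro n
    induction n with
    | zero => simp [hE, hD0]
    | succ n ih =>
      have h := hpos n
      rw [hstep]; push_cast; nlinarith [sq_nonneg (E n - 1/2)]
  have hEtop : Filter.Tendsto E Filter.atTop Filter.atTop := by
    apply Filter.tendsto_atTop_mono hgrow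
    apply Filter.tendsto_atTop_add_const_left
    exact Filter.Tendsto.atTop_mul_const (by linarith : (0:ℝ) < a*b - 1/4)
      tendsto_natCast_atTop_atTop
  have hshift : ∀ m : ℕ, Filter.Tendsto (fun l => E (m + l)) Filter.atTop Filter.atTop := by
    intro m
    have hm : Filter.Tendsto (fun l : ℕ => m + l) Filter.atTop Filter.atTop :=
      Filter.tendsto_atTop_mono (fun l => Nat.le_add_left l m) Filter.tendsto_id
    exact hEtop.comp hm
  induction k with
  | zero =>
    simp only [pow_zero, pow_one, Nat.zero_add]
    have h : (fun l : ℕ => E l / E l) =ᶠ[Filter.atTop] fun _ => (1:ℝ) := by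
      filter_upwards [] with l
      exact div_self (ne_of_gt (hpos l))
    exact Filter.Tendsto.congr' h.symm tendsto_const_nhds
  | succ k ih =>
    have key : (fun l : ℕ => E (k+1 + l) / E l ^ (2 ^ (k+1)))
        = fun l => (E (k + l) / E l ^ (2 ^ k)) ^ 2 * (1 + a*b / E (k + l) ^ 2) := by
      funext l
      have h1 : E (k + l + 1) = a*b + E (k+l)^2 := hstep _
      have h2 : (k+1+l) = (k+l)+1 := by ring
      have hne : E (k+l) ≠ 0 := ne_of_gt (hpos _)
      have hy : E l ^ (2^k) ≠ 0 := pow_ne_zero _ (ne_of_gt (hpos l))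
      have aux : ∀ x y c : ℝ, x ≠ 0 → y ≠ 0 →
          (c + x^2)/y^2 = (x/y)^2*(1+c/x^2) := by
        intro x y c hx hy; field_simp; ring
      rw [h2, h1, show (2:ℕ)^(k+1) = 2^k*2 from pow_succ 2 k, pow_mul]
      exact aux _ _ _ hne hy
    rw [key]
    have h1 : Filter.Tendsto (fun l => (E (k + l) / E l ^ (2 ^ k)) ^ 2)
        Filter.atTop (nhds 1) := by
      simpa using ih.pow 2
    have h2 : Filter.Tendsto (fun l => 1 + a*b / E (k + l) ^ 2) Filter.atTop (nhds 1) := by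
      have hsq : Filter.Tendsto (fun l => E (k + l) ^ 2) Filter.atTop Filter.atTop := by
        have := Filter.Tendsto.atTop_mul_atTop₀ (hshift k) (hshift k)
        simpa [sq] using this
      have h0 : Filter.Tendsto (fun l => a*b / E (k + l) ^ 2) Filter.atTop (nhds 0) :=
        Filter.Tendsto.div_atTop tendsto_const_nhds hsq
      simpa using (tendsto_const_nhds (x := (1:ℝ))).add h0
    simpa using h1.mul h2
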